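/- For all vectors ω, γ ∈ ℝ³, the matrix τ(ω,γ) := (I₄ − X(ω,γ)/2)⁻¹ (I₄ + X(ω,γ)/2) is the 4×4 matrix whose upper-left 3×3 block is the Cayley transform cay(ω̂) = (I₃ − ω̂/2)⁻¹ (I₃ + ω̂/2), whose upper-right 3×1 column is (4/(4+‖ω‖²)) (I₃ + (1/2)ω̂ + (1/4) ω ωᵀ) γ, and whose last row is (0,0,0,1). In particular, τ takes values in SE(3): its rotation block lies in SO(3) and its last row is (0,0,0,1). -/

import Mathlib

open Matrix

noncomputable section

/-- The hat map `ω ↦ ω̂` sending a vector in `ℝ³` to the skew-symmetric matrix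
satisfying `ω̂ v = ω × v`. -/
def hat (ω : EuclideanSpace ℝ (Fin 3)) : Matrix (Fin 3) (Fin 3) ℝ :=
  !![0, -ω 2, ω 1; ω 2, 0, -ω 0; -ω 1, ω 0, 0]

/-- The Cayley transform `cay(ω̂) = (I₃ − ω̂/2)⁻¹ (I₃ + ω̂/2)`. -/
def cay (ω : EuclideanSpace ℝ (Fin 3)) : Matrix (Fin 3) (Fin 3) ℝ :=
  ((1 : Matrix (Fin 3) (Fin 3) ℝ) - (1/2 : ℝ) • hat ω)⁻¹ *
    ((1 : Matrix (Fin 3) (Fin 3) ℝ) + (1/2 : ℝ) • hat ω)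

/-- The embedding of `se(3)` into `4×4` real matrices: `X(ω,γ)` has upper-left `3×3`
block `ω̂`, upper-right column `γ`, and zero last row. -/
def Xse (ω γ : EuclideanSpace ℝ (Fin 3)) : Matrix (Fin 4) (Fin 4) ℝ :=
  !![0, -ω 2, ω 1, γ 0;
     ω 2, 0, -ω 0, γ 1;
     -ω 1, ω 0, 0, γ 2;
     0, 0, 0, 0]

/-- The `4×4` matrix with rotation block `Λ`, translation column `r`, and last row
`(0,0,0,1)`, i.e. the embedding of `SE(3)` into `4×4` real matrices. -/
def g4 (Λ : Matrix (Fin 3) (Fin 3) ℝ) (r : EuclideanSpace ℝ (Fin 3)) :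
    Matrix (Fin 4) (Fin 4) ℝ :=
  !![Λ 0 0, Λ 0 1, Λ 0 2, r 0;
     Λ 1 0, Λ 1 1, Λ 1 2, r 1;
     Λ 2 0, Λ 2 1, Λ 2 2, r 2;
     0, 0, 0, 1]

/-- `τ(ω,γ) = (I₄ − X(ω,γ)/2)⁻¹ (I₄ + X(ω,γ)/2)` is the `4×4` matrix with rotation block
`cay(ω̂)`, translation column `(4/(4+‖ω‖²)) (I₃ + (1/2)ω̂ + (1/4) ω ωᵀ) γ`, and last row
`(0,0,0,1)`; in particular it takes values in `SE(3)`: its rotation block is in `SO(3)`. -/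
lemma norm_sq_eq (ω : EuclideanSpace ℝ (Fin 3)) :
    ‖ω‖^2 = ω 0 ^ 2 + ω 1 ^ 2 + ω 2 ^ 2 := by
  rw [EuclideanSpace.norm_eq, Real.sq_sqrt (by positivity)]
  simp [Fin.sum_univ_three, sq_abs]

/-- Squared norm shorthand (as polynomial in the coordinates). -/
def dd (ω : EuclideanSpace ℝ (Fin 3)) : ℝ := 4 + ω 0 ^ 2 + ω 1 ^ 2 + ω 2 ^ 2

lemma dd_ne (ω : EuclideanSpace ℝ (Fin 3)) : dd ω ≠ 0 := by
  have : (0:ℝ) < dd ω := by unfold dd; positivity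
  exact ne_of_gt this

lemma dd_eq (ω : EuclideanSpace ℝ (Fin 3)) : dd ω = 4 + ‖ω‖^2 := by
  rw [norm_sq_eq, dd]; ring

/-- `dd ω • cay ω`, with polynomial entries. -/
def Pm (ω : EuclideanSpace ℝ (Fin 3)) : Matrix (Fin 3) (Fin 3) ℝ :=
  !![4 + ω 0^2 - ω 1^2 - ω 2^2, -4*ω 2 + 2*ω 0*ω 1, 4*ω 1 + 2*ω 0*ω 2;
     4*ω 2 + 2*ω 0*ω 1, 4 - ω 0^2 + ω 1^2 - ω 2^2, -4*ω 0 + 2*ω 1*ω 2;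
     -4*ω 1 + 2*ω 0*ω 2, 4*ω 0 + 2*ω 1*ω 2, 4 - ω 0^2 - ω 1^2 + ω 2^2]

/-- Polynomial form of the translation column times `dd ω`. -/
def uvec (ω γ : EuclideanSpace ℝ (Fin 3)) : Fin 3 → ℝ :=
  ![4*γ 0 + 2*(ω 1*γ 2 - ω 2*γ 1) + ω 0*(ω 0*γ 0 + ω 1*γ 1 + ω 2*γ 2),
    4*γ 1 + 2*(ω 2*γ 0 - ω 0*γ 2) + ω 1*(ω 0*γ 0 + ω 1*γ 1 + ω 2*γ 2),
    4*γ 2 + 2*(ω 0*γ 1 - ω 1*γ 0) + ω 2*(ω 0*γ 0 + ω 1*γ 1 + ω 2*γ 2)]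

def Gm (ω γ : EuclideanSpace ℝ (Fin 3)) : Matrix (Fin 4) (Fin 4) ℝ :=
  !![Pm ω 0 0, Pm ω 0 1, Pm ω 0 2, uvec ω γ 0;
     Pm ω 1 0, Pm ω 1 1, Pm ω 1 2, uvec ω γ 1;
     Pm ω 2 0, Pm ω 2 1, Pm ω 2 2, uvec ω γ 2;
     0, 0, 0, dd ω]

set_option maxHeartbeats 800000 in
lemma L1 (ω : EuclideanSpace ℝ (Fin 3)) :
    ((1 : Matrix (Fin 3) (Fin 3) ℝ) - (1/2 : ℝ) • hat ω) * Pm ω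
      = dd ω • ((1 : Matrix (Fin 3) (Fin 3) ℝ) + (1/2 : ℝ) • hat ω) := by
  ext i j
  fin_cases i <;> fin_cases j <;>
    · simp [Matrix.mul_apply, Fin.sum_univ_three, hat, Pm, dd, Matrix.one_apply]
      ring

set_option maxHeartbeats 800000 in
lemma L2 (ω : EuclideanSpace ℝ (Fin 3)) :
    (Pm ω)ᵀ * Pm ω = (dd ω)^2 • (1 : Matrix (Fin 3) (Fin 3) ℝ) := by
  ext i j
  fin_cases i <;> fin_cases j <;>
    · simp only [Matrix.mul_apply, Matrix.transpose_apply, Fin.sum_univ_three]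
      simp [Pm, dd, Matrix.one_apply]
      ring

set_option maxHeartbeats 800000 in
lemma L3 (ω : EuclideanSpace ℝ (Fin 3)) : (Pm ω).det = (dd ω)^3 := by
  rw [Matrix.det_fin_three]
  simp [Pm, dd]
  ring

set_option maxHeartbeats 1200000 in
lemma L4 (ω γ : EuclideanSpace ℝ (Fin 3)) :
    ((1 : Matrix (Fin 4) (Fin 4) ℝ) - (1/2 : ℝ) • Xse ω γ) * Gm ω γ
      = dd ω • ((1 : Matrix (Fin 4) (Fin 4) ℝ) + (1/2 : ℝ) • Xse ω γ) := by
  ext i j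
  fin_cases i <;> fin_cases j <;>
    · simp [-mul_eq_zero, -smul_eq_zero, Matrix.mul_apply, Fin.sum_univ_four, Xse, Gm, Pm, uvec, dd,
        Matrix.one_apply]
      try ring
      try (right; rfl)

lemma cay_smul (ω : EuclideanSpace ℝ (Fin 3)) : cay ω = (dd ω)⁻¹ • Pm ω := by
  have hdet : ((1 : Matrix (Fin 3) (Fin 3) ℝ) - (1/2 : ℝ) • hat ω) *
      ((dd ω)⁻¹ • Pm ω) = (1 : Matrix (Fin 3) (Fin 3) ℝ) + (1/2 : ℝ) • hat ω := by
    rw [Matrix.mul_smul, L1, smul_smul, inv_mul_cancel₀ (dd_ne ω), one_smul]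
  have hd : ((1 : Matrix (Fin 3) (Fin 3) ℝ) - (1/2 : ℝ) • hat ω).det = dd ω / 4 := by
    rw [Matrix.det_fin_three, dd]
    simp [hat, Matrix.one_apply]
    ring
  have hu : IsUnit ((1 : Matrix (Fin 3) (Fin 3) ℝ) - (1/2 : ℝ) • hat ω).det := by
    rw [hd]
    exact isUnit_iff_ne_zero.mpr (div_ne_zero (dd_ne ω) (by norm_num))
  haveI := Matrix.invertibleOfIsUnitDet _ hu
  rw [cay, Matrix.inv_mul_eq_iff_eq_mul_of_invertible, hdet]

lemma cay_orth (ω : EuclideanSpace ℝ (Fin 3)) : (cay ω)ᵀ * cay ω = 1 := by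
  rw [cay_smul, Matrix.transpose_smul, Matrix.smul_mul, Matrix.mul_smul, L2,
    smul_smul, smul_smul]
  rw [show ((dd ω)⁻¹ * (dd ω)⁻¹ * (dd ω)^2) = 1 by
    have := dd_ne ω; field_simp]
  exact one_smul _ _

lemma cay_det (ω : EuclideanSpace ℝ (Fin 3)) : (cay ω).det = 1 := by
  rw [cay_smul, Matrix.det_smul, L3]
  have := dd_ne ω
  field_simp
  rw [Fintype.card_fin, one_div, inv_pow, mul_inv_cancel₀ (pow_ne_zero 3 this)]

lemma esmul_apply (c : ℝ) (v : EuclideanSpace ℝ (Fin 3)) (k : Fin 3) :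
    (c • v) k = c * v k := rfl


set_option maxHeartbeats 1000000 in
theorem tau_block_form (ω γ : EuclideanSpace ℝ (Fin 3)) :
    ((1 : Matrix (Fin 4) (Fin 4) ℝ) - (1/2 : ℝ) • Xse ω γ)⁻¹ *
        ((1 : Matrix (Fin 4) (Fin 4) ℝ) + (1/2 : ℝ) • Xse ω γ)
      = g4 (cay ω)
          (WithLp.toLp 2 ((4 / (4 + ‖ω‖^2)) •
            (((1 : Matrix (Fin 3) (Fin 3) ℝ) + (1/2 : ℝ) • hat ω +
                (1/4 : ℝ) • vecMulVec (ω : Fin 3 → ℝ) (ω : Fin 3 → ℝ)) *ᵥ γ))) ∧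
    (cay ω)ᵀ * cay ω = 1 ∧ (cay ω).det = 1 ∧
    (∀ j : Fin 4,
      (((1 : Matrix (Fin 4) (Fin 4) ℝ) - (1/2 : ℝ) • Xse ω γ)⁻¹ *
          ((1 : Matrix (Fin 4) (Fin 4) ℝ) + (1/2 : ℝ) • Xse ω γ)) 3 j
        = ![(0 : ℝ), 0, 0, 1] j) := by
  have hdne := dd_ne ω
  have hinv : ((1 : Matrix (Fin 4) (Fin 4) ℝ) - (1/2 : ℝ) • Xse ω γ) *
      ((2 * dd ω)⁻¹ • (Gm ω γ + dd ω • 1)) = 1 := by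
    rw [Matrix.mul_smul, Matrix.mul_add, L4, Matrix.mul_smul, Matrix.mul_one,
      ← smul_add]
    have hsum : ((1 : Matrix (Fin 4) (Fin 4) ℝ) + (1/2 : ℝ) • Xse ω γ) +
        ((1 : Matrix (Fin 4) (Fin 4) ℝ) - (1/2 : ℝ) • Xse ω γ)
        = (2 : ℝ) • (1 : Matrix (Fin 4) (Fin 4) ℝ) := by module
    rw [hsum, smul_smul, smul_smul]
    rw [show ((2 * dd ω)⁻¹ * dd ω * 2) = 1 by field_simp]
    exact one_smul _ _
  haveI := invertibleOfRightInverse _ _ hinv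
  have hG : g4 (cay ω)
          (WithLp.toLp 2 ((4 / (4 + ‖ω‖^2)) •
            (((1 : Matrix (Fin 3) (Fin 3) ℝ) + (1/2 : ℝ) • hat ω +
                (1/4 : ℝ) • vecMulVec (ω : Fin 3 → ℝ) (ω : Fin 3 → ℝ)) *ᵥ γ)))
      = (dd ω)⁻¹ • Gm ω γ := by
    have hr : ∀ (c : ℝ) (k : Fin 3),
        (WithLp.toLp 2 (c • (((1 : Matrix (Fin 3) (Fin 3) ℝ) + (1/2 : ℝ) • hat ω +
            (1/4 : ℝ) • vecMulVec (ω : Fin 3 → ℝ) (ω : Fin 3 → ℝ)) *ᵥ γ)) :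
          EuclideanSpace ℝ (Fin 3)) k
        = c * ((((1 : Matrix (Fin 3) (Fin 3) ℝ) + (1/2 : ℝ) • hat ω +
            (1/4 : ℝ) • vecMulVec (ω : Fin 3 → ℝ) (ω : Fin 3 → ℝ)) *ᵥ γ) k) :=
      fun c k => rfl
    rw [cay_smul, ← dd_eq]
    ext i j
    fin_cases i <;> fin_cases j <;>
      · simp only [hr, g4]
        simp [Gm, Pm, uvec, esmul_apply, hat, Matrix.mulVec, dotProduct, Fin.sum_univ_three,
          PiLp.smul_apply, Pi.smul_apply, smul_eq_mul, Matrix.vecMulVec_apply,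
          Matrix.one_apply, Matrix.add_apply, Matrix.smul_apply]
        try field_simp
        try ring
  have hmain : ((1 : Matrix (Fin 4) (Fin 4) ℝ) - (1/2 : ℝ) • Xse ω γ)⁻¹ *
        ((1 : Matrix (Fin 4) (Fin 4) ℝ) + (1/2 : ℝ) • Xse ω γ)
      = g4 (cay ω)
          (WithLp.toLp 2 ((4 / (4 + ‖ω‖^2)) •
            (((1 : Matrix (Fin 3) (Fin 3) ℝ) + (1/2 : ℝ) • hat ω +
                (1/4 : ℝ) • vecMulVec (ω : Fin 3 → ℝ) (ω : Fin 3 → ℝ)) *ᵥ γ))) := by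
    rw [hG, Matrix.inv_mul_eq_iff_eq_mul_of_invertible, Matrix.mul_smul, L4,
      smul_smul, inv_mul_cancel₀ hdne, one_smul]
  refine ⟨hmain, cay_orth ω, cay_det ω, fun j => by rw [hmain]; fin_cases j <;> simp [g4]⟩
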